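/- Let d ≥ 1, E ⊆ ℝ^d be a non-degenerate parallelepiped, φ be a Schwartz function on ℝ^d, and let f be a continuous E-periodic function such that Σ_{α∈Λ'_E} |c(f,α)| < ∞ and f(x) = Σ_{α∈Λ'_E} c(f,α) e^{i⟨x,α⟩} for all x. Then for every (x,ξ) ∈ ℝ^d × ℝ^d the series Σ_{α∈Λ'_E} c(f,α) conj(φ̂(α−ξ)) e^{i⟨x,α⟩} converges absolutely and V_φf(x,ξ) = e^{-i⟨x,ξ⟩} Σ_{α∈Λ'_E} c(f,α) conj(φ̂(α−ξ)) e^{i⟨x,α⟩}. -/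

import Mathlib

open MeasureTheory Filter
open scoped BigOperators InnerProductSpace Topology

noncomputable section

abbrev Euc (d : ℕ) := EuclideanSpace ℝ (Fin d)

/-- The lattice point `∑ i, j i • e i` associated with `j : ℤ^d`. -/
def latPt {d : ℕ} (e : Fin d → Euc d) (j : Fin d → ℤ) : Euc d :=
  ∑ i, (j i : ℝ) • e i

/-- The (closed) parallelepiped spanned by `e`. -/
def paraSet {d : ℕ} (e : Fin d → Euc d) : Set (Euc d) :=
  (fun t : Fin d → ℝ => ∑ i, t i • e i) '' (Set.univ.pi fun _ => Set.Icc (0:ℝ) 1)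

/-- Fourier coefficient `c(f, ξ) = |E|⁻¹ ∫_E f(x) e^{-i⟨x,ξ⟩} dx`. -/
def fourCoeff {d : ℕ} (e : Fin d → Euc d) (f : Euc d → ℂ) (ξ : Euc d) : ℂ :=
  (((volume (paraSet e)).toReal : ℂ))⁻¹ *
    ∫ x in paraSet e, f x * Complex.exp (-(Complex.I) * (⟪x, ξ⟫_ℝ : ℂ))

/-- Iterated partial derivatives along a list of coordinate directions. -/
def pdSeq {d : ℕ} : List (Fin d) → (Euc d → ℂ) → (Euc d → ℂ)
  | [], f => f
  | (i :: L), f => pdSeq L (fun x => fderiv ℝ f x (EuclideanSpace.single i 1))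

/-- The canonical list of directions attached to a multi-index `β`. -/
def mIdxL {d : ℕ} (β : Fin d → ℕ) : List (Fin d) :=
  (List.finRange d).flatMap fun i => List.replicate (β i) i

/-- The multi-index partial derivative `∂^β f`. -/
def pD {d : ℕ} (β : Fin d → ℕ) (f : Euc d → ℂ) : Euc d → ℂ := pdSeq (mIdxL β) f

/-- Fourier transform, normalized as `(2π)^{-d/2} ∫ f(x) e^{-i⟨x,ξ⟩} dx`. -/
def FT {d : ℕ} (f : Euc d → ℂ) (ξ : Euc d) : ℂ :=
  (((2 * Real.pi) ^ (-(d:ℝ)/2) : ℝ) : ℂ) *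
    ∫ x, f x * Complex.exp (-(Complex.I) * (⟪x, ξ⟫_ℝ : ℂ))

/-- Short-time Fourier transform with window `φ`. -/
def STFT {d : ℕ} (φ f : Euc d → ℂ) (x ξ : Euc d) : ℂ :=
  (((2 * Real.pi) ^ (-(d:ℝ)/2) : ℝ) : ℂ) *
    ∫ y, f y * (starRingEnd ℂ) (φ (y - x)) * Complex.exp (-(Complex.I) * (⟪y, ξ⟫_ℝ : ℂ))


/-- for a continuous `E`-periodic function with absolutely convergent Fourier
series and a Schwartz window `φ`, the short-time Fourier transform is given by
`V_φf(x,ξ) = e^{-i⟨x,ξ⟩} Σ_α c(f,α) conj(φ̂(α−ξ)) e^{i⟨x,α⟩}`, the series converging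
absolutely. -/
theorem stft_of_periodic_fourier_series
    {d : ℕ} (hd : 1 ≤ d)
    (e e' : Fin d → Euc d) (he : LinearIndependent ℝ e)
    (hdual : ∀ j k, ⟪e j, e' k⟫_ℝ = if j = k then 2 * Real.pi else 0)
    (φ : SchwartzMap (Euc d) ℂ)
    (f : Euc d → ℂ) (hfc : Continuous f)
    (hper : ∀ (x : Euc d) (j : Fin d → ℤ), f (x + latPt e j) = f x)
    (hsum : Summable fun ι : Fin d → ℤ => ‖fourCoeff e f (latPt e' ι)‖)
    (hrepr : ∀ x : Euc d,
      f x = ∑' ι : Fin d → ℤ,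
        fourCoeff e f (latPt e' ι) * Complex.exp (Complex.I * (⟪x, latPt e' ι⟫_ℝ : ℂ))) :
    ∀ x ξ : Euc d,
      Summable (fun ι : Fin d → ℤ =>
        ‖fourCoeff e f (latPt e' ι) * (starRingEnd ℂ) (FT (⇑φ) (latPt e' ι - ξ)) *
            Complex.exp (Complex.I * (⟪x, latPt e' ι⟫_ℝ : ℂ))‖) ∧
      STFT (⇑φ) f x ξ =
        Complex.exp (-(Complex.I) * (⟪x, ξ⟫_ℝ : ℂ)) *
          ∑' ι : Fin d → ℤ,
            fourCoeff e f (latPt e' ι) * (starRingEnd ℂ) (FT (⇑φ) (latPt e' ι - ξ)) *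
              Complex.exp (Complex.I * (⟪x, latPt e' ι⟫_ℝ : ℂ)) := by

  intro x ξ
  set P : ℝ := (2 * Real.pi) ^ (-(d:ℝ)/2) with hP
  set c : (Fin d → ℤ) → ℂ := fun ι => fourCoeff e f (latPt e' ι) with hc
  set a : (Fin d → ℤ) → Euc d := fun ι => latPt e' ι with ha
  have hnorm1 : ∀ r : ℝ, ‖Complex.exp (Complex.I * (r:ℂ))‖ = 1 := fun r => by
    rw [Complex.norm_exp]; simp
  have hnorm1' : ∀ r : ℝ, ‖Complex.exp (-(Complex.I) * (r:ℂ))‖ = 1 := fun r => by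
    rw [Complex.norm_exp]; simp
  have hφint : Integrable (⇑φ) volume := φ.integrable
  -- conjugated Fourier transform formula
  have hconjFT : ∀ η : Euc d, (starRingEnd ℂ) (FT (⇑φ) η) =
      ((P : ℝ) : ℂ) * ∫ y, (starRingEnd ℂ) (φ y) * Complex.exp (Complex.I * (⟪y, η⟫_ℝ : ℂ)) := by
    intro η
    rw [FT, map_mul, Complex.conj_ofReal, ← integral_conj]
    congr 1
    refine integral_congr_ae (Filter.Eventually.of_forall fun y => ?_)
    simp only [map_mul, ← Complex.exp_conj, map_neg, Complex.conj_I, Complex.conj_ofReal,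
      neg_mul, neg_neg]
  -- uniform bound for the Fourier transform
  have hFTb : ∀ η : Euc d, ‖FT (⇑φ) η‖ ≤ P * ∫ y, ‖φ y‖ := by
    intro η
    rw [FT]
    rw [norm_mul, Complex.norm_real, Real.norm_of_nonneg (by positivity)]
    gcongr
    calc ‖∫ y, φ y * Complex.exp (-(Complex.I) * (⟪y, η⟫_ℝ : ℂ))‖
        ≤ ∫ y, ‖φ y * Complex.exp (-(Complex.I) * (⟪y, η⟫_ℝ : ℂ))‖ :=
          norm_integral_le_integral_norm _
      _ = ∫ y, ‖φ y‖ := by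
          refine integral_congr_ae (Filter.Eventually.of_forall fun y => ?_)
          simp only [norm_mul, hnorm1', mul_one]
  -- Part 1: absolute convergence
  have hsummain : Summable (fun ι : Fin d → ℤ =>
      ‖c ι * (starRingEnd ℂ) (FT (⇑φ) (a ι - ξ)) *
        Complex.exp (Complex.I * (⟪x, a ι⟫_ℝ : ℂ))‖) := by
    refine Summable.of_nonneg_of_le (fun ι => norm_nonneg _) (fun ι => ?_)
      (hsum.mul_right (P * ∫ y, ‖φ y‖))
    rw [norm_mul, norm_mul, hnorm1, mul_one, RCLike.norm_conj]
    exact mul_le_mul_of_nonneg_left (hFTb _) (norm_nonneg _)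
  refine ⟨hsummain, ?_⟩
  -- the summand functions
  set F : (Fin d → ℤ) → Euc d → ℂ := fun ι y =>
    c ι * Complex.exp (Complex.I * (⟪y, a ι⟫_ℝ : ℂ)) *
      ((starRingEnd ℂ) (φ (y - x)) * Complex.exp (-(Complex.I) * (⟪y, ξ⟫_ℝ : ℂ))) with hF
  have hKint : Integrable (fun y : Euc d => (starRingEnd ℂ) (φ (y - x))) volume := by
    have h2 : Integrable (fun y : Euc d => φ (y - x)) volume := hφint.comp_sub_right x
    refine h2.mono (continuous_star.comp_aestronglyMeasurable h2.aestronglyMeasurable)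
      (Filter.Eventually.of_forall fun y => ?_)
    simp
  have hcontexp : ∀ η : Euc d,
      Continuous fun y : Euc d => Complex.exp (Complex.I * (⟪y, η⟫_ℝ : ℂ)) := fun η =>
    (continuous_const.mul (Complex.continuous_ofReal.comp
      (continuous_id.inner continuous_const))).cexp
  have hcontexp' : ∀ η : Euc d,
      Continuous fun y : Euc d => Complex.exp (-(Complex.I) * (⟪y, η⟫_ℝ : ℂ)) := fun η =>
    (continuous_const.mul (Complex.continuous_ofReal.comp
      (continuous_id.inner continuous_const))).cexp
  have hFint : ∀ ι, Integrable (F ι) volume := by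
    intro ι
    have h1 : Integrable (fun y : Euc d =>
        Complex.exp (Complex.I * (⟪y, a ι⟫_ℝ : ℂ)) *
          (Complex.exp (-(Complex.I) * (⟪y, ξ⟫_ℝ : ℂ)) * (starRingEnd ℂ) (φ (y - x)))) volume := by
      have h2 : Integrable (fun y : Euc d =>
          Complex.exp (-(Complex.I) * (⟪y, ξ⟫_ℝ : ℂ)) * (starRingEnd ℂ) (φ (y - x))) volume :=
        hKint.bdd_mul ((hcontexp' ξ).aestronglyMeasurable) (Filter.Eventually.of_forall fun y => le_of_eq (hnorm1' _))
      exact h2.bdd_mul ((hcontexp (a ι)).aestronglyMeasurable)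
        (Filter.Eventually.of_forall fun y => le_of_eq (hnorm1 _))
    have := h1.const_mul (c ι)
    refine this.congr (Filter.Eventually.of_forall fun y => ?_)
    simp only [hF]; ring
  have hnormF : ∀ ι, (fun y => ‖F ι y‖) = fun y => ‖c ι‖ * ‖φ (y - x)‖ := by
    intro ι
    funext y
    simp only [hF, norm_mul, hnorm1, hnorm1', RCLike.norm_conj, mul_one, one_mul]
  have hIntNormF : ∀ ι, (∫ y, ‖F ι y‖) = ‖c ι‖ * ∫ y, ‖φ y‖ := by
    intro ι
    rw [hnormF ι, integral_const_mul]
    congr 1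
    exact integral_sub_right_eq_self (fun y => ‖φ y‖) x
  have hsumInt : Summable fun ι => ∫ y, ‖F ι y‖ := by
    simp only [hIntNormF]
    exact hsum.mul_right _
  -- pointwise expansion of the integrand
  have hint_eq : ∀ y : Euc d,
      f y * (starRingEnd ℂ) (φ (y - x)) * Complex.exp (-(Complex.I) * (⟪y, ξ⟫_ℝ : ℂ)) =
        ∑' ι, F ι y := by
    intro y
    rw [hrepr y, mul_assoc, ← tsum_mul_right]
  -- per-term integral computation
  have hterm : ∀ ι, ((P : ℝ) : ℂ) * ∫ y, F ι y =
      Complex.exp (-(Complex.I) * (⟪x, ξ⟫_ℝ : ℂ)) *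
        (c ι * (starRingEnd ℂ) (FT (⇑φ) (a ι - ξ)) *
          Complex.exp (Complex.I * (⟪x, a ι⟫_ℝ : ℂ))) := by
    intro ι
    have hshift : ∀ y : Euc d, F ι (y + x) =
        (c ι * Complex.exp (Complex.I * (⟪x, a ι⟫_ℝ : ℂ)) *
          Complex.exp (-(Complex.I) * (⟪x, ξ⟫_ℝ : ℂ))) *
        ((starRingEnd ℂ) (φ y) * Complex.exp (Complex.I * (⟪y, a ι - ξ⟫_ℝ : ℂ))) := by
      intro y
      simp only [hF, add_sub_cancel_right, inner_add_left, inner_sub_right, Complex.ofReal_add,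
        Complex.ofReal_sub, mul_add, mul_sub, Complex.exp_add, Complex.exp_sub, neg_mul,
        Complex.exp_neg]
      field_simp
    have h1 : (∫ y, F ι y) = ∫ y, F ι (y + x) :=
      (integral_add_right_eq_self (F ι) x).symm
    rw [h1]
    simp only [hshift]
    rw [integral_const_mul, hconjFT (a ι - ξ)]
    ring
  -- assemble
  rw [STFT]
  have hintegrand : (∫ y, f y * (starRingEnd ℂ) (φ (y - x)) *
      Complex.exp (-(Complex.I) * (⟪y, ξ⟫_ℝ : ℂ))) = ∫ y, ∑' ι, F ι y :=
    integral_congr_ae (Filter.Eventually.of_forall hint_eq)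
  rw [hintegrand, ← integral_tsum_of_summable_integral_norm hFint hsumInt, ← tsum_mul_left]
  simp only [← hP, hterm]
  rw [tsum_mul_left]

end
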